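/- Let Ω be a countable set and let p, q be probability mass functions on Ω that are (ε, δ)-indistinguishable with ε > 0 and δ ≥ 0. Define Z = {z ∈ Ω : p(z) > e^{2ε}·q(z)}. Then p(Z) ≤ δ/(1 − e^{−ε}). -/
import Mathlib


open Real

/-- Symmetric intermediate bound in the proof of Lemma A.1: for
(ε, δ)-indistinguishable pmfs `p`, `q`, the set `Z = {z | p z > e^{2ε} q z}`
satisfies `p(Z) ≤ δ / (1 - e^{-ε})`. -/
theorem pmf_indistinguishable_upper_bad_set_small
    {Ω : Type*} [Countable Ω] (p q : Ω → ℝ)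
    (hp0 : ∀ z, 0 ≤ p z) (hq0 : ∀ z, 0 ≤ q z)
    (hp1 : HasSum p 1) (hq1 : HasSum q 1)
    (ε δ : ℝ) (hε : 0 < ε) (hδ : 0 ≤ δ)
    (hind₁ : ∀ T : Set Ω, (∑' z : T, p z) ≤ exp ε * (∑' z : T, q z) + δ)
    (hind₂ : ∀ T : Set Ω, (∑' z : T, q z) ≤ exp ε * (∑' z : T, p z) + δ) :
    (∑' z : {z : Ω | p z > exp (2 * ε) * q z}, p z) ≤ δ / (1 - exp (-ε)) := by
  set Z : Set Ω := {z : Ω | p z > exp (2 * ε) * q z} with hZ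
  have hps : Summable p := hp1.summable
  have hpZ : Summable (fun z : Z => p z) := hps.subtype _
  have hqZ : Summable (fun z : Z => q z) := hq1.summable.subtype _
  have hqp : (∑' z : Z, q z) ≤ exp (-(2 * ε)) * (∑' z : Z, p z) := by
    rw [← tsum_mul_left]
    refine Summable.tsum_le_tsum (fun z => ?_) hqZ (hpZ.mul_left _)
    have hz : p z.1 > exp (2 * ε) * q z.1 := z.2
    have h := mul_le_mul_of_nonneg_left hz.le (exp_pos (-(2 * ε))).le
    have hcancel : exp (-(2 * ε)) * (exp (2 * ε) * q z.1) = q z.1 := by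
      rw [← mul_assoc, ← exp_add]; simp
    linarith
  have hkey : (∑' z : Z, p z) ≤ exp ε * (exp (-(2 * ε)) * (∑' z : Z, p z)) + δ := by
    refine le_trans (hind₁ Z) ?_
    have := mul_le_mul_of_nonneg_left hqp (exp_pos ε).le
    linarith
  have hexp : exp ε * exp (-(2 * ε)) = exp (-ε) := by
    rw [← exp_add]; ring_nf
  have h1 : 0 < 1 - exp (-ε) := by
    have : exp (-ε) < 1 := exp_lt_one_iff.mpr (by linarith)
    linarith
  rw [le_div_iff₀ h1]
  nlinarith [hkey, hexp]
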